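/- Let n ≥ 1 and u₁,...,uₙ, v₁,...,vₙ be reals each with Σᵢuᵢ = Σᵢvᵢ = 0, and with all λuᵢ + 1/n > 0 and λvᵢ + 1/n > 0 for λ ∈ [0,1]. Define h(λ) = f(λ) - g(λ) where f(λ) = -Σᵢ(λuᵢ+1/n)log₂(λuᵢ+1/n) and g(λ) = -Σᵢ(λvᵢ+1/n)log₂(λvᵢ+1/n). Then h''(λ)·∏ᵢ(λuᵢ+1/n)·∏ᵢ(λvᵢ+1/n) coincides on (0,1) with a polynomial of degree at most 2n - 2. -/

import Mathlib

open Polynomial Finset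

private lemma aux_d1 {n : ℕ} (w : Fin n → ℝ) (c l : ℝ)
    (hpos : ∀ i, l * w i + c > 0) :
    HasDerivAt (fun t => -∑ i, (t * w i + c) * Real.logb 2 (t * w i + c))
      (-(∑ i, w i * (Real.log (l * w i + c) + 1)) / Real.log 2) l := by
  have h : ∀ i : Fin n, HasDerivAt (fun t => (t * w i + c) * Real.log (t * w i + c))
      (w i * (Real.log (l * w i + c) + 1)) l := by
    intro i
    have hne : l * w i + c ≠ 0 := ne_of_gt (hpos i)
    have h1 : HasDerivAt (fun t : ℝ => t * w i + c) (w i) l := by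
      simpa using ((hasDerivAt_id l).mul_const (w i)).add_const c
    have h3 := h1.fun_mul (h1.log hne)
    convert! h3 using 1
    rw [mul_comm (l * w i + c), div_mul_cancel₀ _ hne]
    ring
  have hs := HasDerivAt.fun_sum (fun i (_ : i ∈ Finset.univ) => h i)
  have heq : (fun t => -∑ i, (t * w i + c) * Real.logb 2 (t * w i + c))
      = fun t => -(∑ i : Fin n, (t * w i + c) * Real.log (t * w i + c)) / Real.log 2 := by
    funext t
    simp only [Real.logb, neg_div, Finset.sum_div]
    congr 1
    exact Finset.sum_congr rfl fun i _ => (mul_div_assoc _ _ _).symm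
  rw [heq]
  exact hs.neg.div_const _

private lemma aux_d2 {n : ℕ} (w : Fin n → ℝ) (c l : ℝ)
    (hpos : ∀ i, l * w i + c > 0) :
    HasDerivAt (fun t => -(∑ i, w i * (Real.log (t * w i + c) + 1)) / Real.log 2)
      (-(∑ i, (w i) ^ 2 / (l * w i + c)) / Real.log 2) l := by
  have h : ∀ i : Fin n, HasDerivAt (fun t => w i * (Real.log (t * w i + c) + 1))
      ((w i) ^ 2 / (l * w i + c)) l := by
    intro i
    have hne : l * w i + c ≠ 0 := ne_of_gt (hpos i)
    have h1 : HasDerivAt (fun t : ℝ => t * w i + c) (w i) l := by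
      simpa using ((hasDerivAt_id l).mul_const (w i)).add_const c
    have h2 := ((h1.log hne).add_const 1).const_mul (w i)
    convert! h2 using 1
    field_simp
  exact ((HasDerivAt.fun_sum (fun i (_ : i ∈ Finset.univ) => h i)).neg).div_const _

private lemma aux_deg {n : ℕ} (w : Fin n → ℝ) (c : ℝ) (hw : ∑ i, w i = 0) :
    (∑ i, Polynomial.C ((w i) ^ 2) *
        ∏ j ∈ Finset.univ.erase i, (Polynomial.C (w j) * Polynomial.X + Polynomial.C c)) = 0 ∨
    (∑ i, Polynomial.C ((w i) ^ 2) *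
        ∏ j ∈ Finset.univ.erase i, (Polynomial.C (w j) * Polynomial.X + Polynomial.C c)).natDegree + 2 ≤ n := by
  set P : Fin n → ℝ[X] := fun j => C (w j) * X + C c with hP
  set A : ℝ[X] := ∑ i, C ((w i) ^ 2) * ∏ j ∈ Finset.univ.erase i, P j with hA
  set B : ℝ[X] := ∑ i, C (w i) * ∏ j ∈ Finset.univ.erase i, P j with hB
  have hterm : ∀ i : Fin n, X * (C ((w i) ^ 2) * ∏ j ∈ Finset.univ.erase i, P j)
      = C (w i) * ∏ j, P j - C c * (C (w i) * ∏ j ∈ Finset.univ.erase i, P j) := by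
    intro i
    rw [← Finset.mul_prod_erase Finset.univ P (Finset.mem_univ i)]
    simp only [hP, pow_two, map_mul]
    ring
  have key : X * A = -(C c) * B := by
    rw [hA, Finset.mul_sum]
    simp only [hterm]
    rw [Finset.sum_sub_distrib, ← Finset.sum_mul, ← map_sum, hw, map_zero, zero_mul, zero_sub,
      hB, Finset.mul_sum]
    simp [neg_mul]
  by_cases hA0 : A = 0
  · left; exact hA0
  · right
    have hXA : (X * A).natDegree = 1 + A.natDegree := by
      rw [natDegree_mul X_ne_zero hA0, natDegree_X]
    have hBdeg : B.natDegree ≤ n - 1 := by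
      apply Polynomial.natDegree_sum_le_of_forall_le
      intro i _
      have h1 : (∏ j ∈ Finset.univ.erase i, P j).natDegree
          ≤ ∑ j ∈ Finset.univ.erase i, (P j).natDegree := natDegree_prod_le _ _
      have h2 : ∑ j ∈ Finset.univ.erase i, (P j).natDegree ≤ ∑ j ∈ Finset.univ.erase i, 1 :=
        Finset.sum_le_sum fun j _ => by rw [hP]; exact natDegree_linear_le
      have h3 : ∑ j ∈ Finset.univ.erase i, (1 : ℕ) = n - 1 := by
        rw [Finset.sum_const, smul_eq_mul, mul_one,
          Finset.card_erase_of_mem (Finset.mem_univ i), Finset.card_univ, Fintype.card_fin]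
      calc (C (w i) * ∏ j ∈ Finset.univ.erase i, P j).natDegree
          ≤ (C (w i)).natDegree + (∏ j ∈ Finset.univ.erase i, P j).natDegree := natDegree_mul_le
        _ ≤ 0 + (n - 1) := add_le_add (le_of_eq (natDegree_C _)) (h1.trans (h2.trans_eq h3))
        _ = n - 1 := zero_add _
    have hfin : (X * A).natDegree ≤ n - 1 := by
      rw [key]
      calc (-C c * B).natDegree = (C c * B).natDegree := by rw [neg_mul, natDegree_neg]
        _ ≤ (C c).natDegree + B.natDegree := natDegree_mul_le
        _ ≤ 0 + (n - 1) := add_le_add (le_of_eq (natDegree_C _)) hBdeg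
        _ = n - 1 := zero_add _
    omega

private lemma aux_deg2 {n : ℕ} (w y : Fin n → ℝ) (c : ℝ) (hw : ∑ i, w i = 0) :
    ((∑ i, Polynomial.C ((w i) ^ 2) *
        ∏ j ∈ Finset.univ.erase i, (Polynomial.C (w j) * Polynomial.X + Polynomial.C c)) *
      ∏ i, (Polynomial.C (y i) * Polynomial.X + Polynomial.C c)).natDegree ≤ 2 * n - 2 := by
  rcases aux_deg w c hw with h | h
  · rw [h, zero_mul, natDegree_zero]; exact Nat.zero_le _
  
  · have hprod : (∏ i, (C (y i) * X + C c)).natDegree ≤ n := by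
      refine (natDegree_prod_le _ _).trans ?_
      have hb : ∀ i ∈ (Finset.univ : Finset (Fin n)), (C (y i) * X + C c).natDegree ≤ 1 :=
        fun i _ => natDegree_linear_le
      have h2 := Finset.sum_le_card_nsmul Finset.univ
        (fun i => (C (y i) * X + C c).natDegree) 1 hb
      simpa using h2
    calc _ ≤ _ + _ := natDegree_mul_le
      _ ≤ _ + n := add_le_add le_rfl hprod
      _ ≤ 2 * n - 2 := by omega

theorem stmt_8 {n : ℕ} (hn : 1 ≤ n) (u v : Fin n → ℝ)
    (hu : ∑ i, u i = 0) (hv : ∑ i, v i = 0)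
    (hupos : ∀ l ∈ Set.Icc (0 : ℝ) 1, ∀ i, l * u i + 1 / n > 0)
    (hvpos : ∀ l ∈ Set.Icc (0 : ℝ) 1, ∀ i, l * v i + 1 / n > 0)
    (f g hfun : ℝ → ℝ)
    (hf : ∀ l, f l = -∑ i, (l * u i + 1 / n) * Real.logb 2 (l * u i + 1 / n))
    (hg : ∀ l, g l = -∑ i, (l * v i + 1 / n) * Real.logb 2 (l * v i + 1 / n))
    (hh : ∀ l, hfun l = f l - g l) :
    ∃ p : Polynomial ℝ, p.degree ≤ (2 * n - 2 : ℕ) ∧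
      ∀ l ∈ Set.Ioo (0 : ℝ) 1,
        deriv (deriv hfun) l * (∏ i, (l * u i + 1 / n)) * (∏ i, (l * v i + 1 / n)) =
          p.eval l := by
  have hL : Real.log 2 ≠ 0 := by
    have := Real.log_pos (by norm_num : (1 : ℝ) < 2); linarith
  set c : ℝ := 1 / (n : ℝ) with hcdef
  have hfeq : f = fun t => -∑ i, (t * u i + c) * Real.logb 2 (t * u i + c) := funext hf
  have hgeq : g = fun t => -∑ i, (t * v i + c) * Real.logb 2 (t * v i + c) := funext hg
  have hheq : hfun = fun t => f t - g t := funext hh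
  set F : ℝ → ℝ := fun t => -(∑ i, u i * (Real.log (t * u i + c) + 1)) / Real.log 2 with hF
  set G : ℝ → ℝ := fun t => -(∑ i, v i * (Real.log (t * v i + c) + 1)) / Real.log 2 with hG
  have hd1 : ∀ t ∈ Set.Ioo (0 : ℝ) 1, deriv hfun t = F t - G t := by
    intro t ht
    have htI : t ∈ Set.Icc (0 : ℝ) 1 := Set.Ioo_subset_Icc_self ht
    have h1 := aux_d1 u c t (hupos t htI)
    have h2 := aux_d1 v c t (hvpos t htI)
    have hD : HasDerivAt hfun (F t - G t) t := by
      rw [hheq, hfeq, hgeq]; exact h1.sub h2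
    exact hD.deriv
  refine ⟨C (Real.log 2)⁻¹ *
      ((∑ i, C ((v i) ^ 2) * ∏ j ∈ Finset.univ.erase i, (C (v j) * X + C c)) *
          ∏ i, (C (u i) * X + C c) -
        (∑ i, C ((u i) ^ 2) * ∏ j ∈ Finset.univ.erase i, (C (u j) * X + C c)) *
          ∏ i, (C (v i) * X + C c)), ?_, ?_⟩
  · refine degree_le_natDegree.trans ?_
    have hnat : (C (Real.log 2)⁻¹ *
        ((∑ i, C ((v i) ^ 2) * ∏ j ∈ Finset.univ.erase i, (C (v j) * X + C c)) *
            ∏ i, (C (u i) * X + C c) -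
          (∑ i, C ((u i) ^ 2) * ∏ j ∈ Finset.univ.erase i, (C (u j) * X + C c)) *
            ∏ i, (C (v i) * X + C c))).natDegree ≤ 2 * n - 2 := by
      calc _ ≤ _ + _ := natDegree_mul_le
        _ ≤ 0 + (2 * n - 2) := by
            refine add_le_add (le_of_eq (natDegree_C _)) ?_
            exact (natDegree_sub_le _ _).trans (max_le (aux_deg2 v u c hv) (aux_deg2 u v c hu))
        _ = 2 * n - 2 := zero_add _
    exact_mod_cast hnat
  · intro l hl
    have hlI : l ∈ Set.Icc (0 : ℝ) 1 := Set.Ioo_subset_Icc_self hl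
    have hup := hupos l hlI
    have hvp := hvpos l hlI
    have hEv : deriv hfun =ᶠ[nhds l] fun t => F t - G t :=
      Filter.eventuallyEq_of_mem (isOpen_Ioo.mem_nhds hl) hd1
    have hD2 : HasDerivAt (fun t => F t - G t)
        ((-(∑ i, (u i) ^ 2 / (l * u i + c)) / Real.log 2) -
          (-(∑ i, (v i) ^ 2 / (l * v i + c)) / Real.log 2)) l :=
      (aux_d2 u c l hup).sub (aux_d2 v c l hvp)
    have hdd : deriv (deriv hfun) l =
        (-(∑ i, (u i) ^ 2 / (l * u i + c)) / Real.log 2) -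
          (-(∑ i, (v i) ^ 2 / (l * v i + c)) / Real.log 2) := by
      rw [hEv.deriv_eq]; exact hD2.deriv
    rw [hdd]
    have hcomm : ∀ (w : Fin n → ℝ) (s : Finset (Fin n)),
        ∏ j ∈ s, (w j * l + c) = ∏ j ∈ s, (l * w j + c) :=
      fun w s => Finset.prod_congr rfl fun j _ => by ring
    have hkey : ∀ (w d : Fin n → ℝ), (∀ i, d i ≠ 0) →
        (∑ i, (w i) ^ 2 / d i) * ∏ j, d j =
          ∑ i, (w i) ^ 2 * ∏ j ∈ Finset.univ.erase i, d j := by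
      intro w d hd
      rw [Finset.sum_mul]
      refine Finset.sum_congr rfl fun i _ => ?_
      rw [← Finset.mul_prod_erase Finset.univ d (Finset.mem_univ i)]
      field_simp
      rw [mul_right_comm, mul_div_assoc, div_self (hd i), mul_one]
    have e1 := hkey u (fun j => l * u j + c) (fun i => ne_of_gt (hup i))
    have e2 := hkey v (fun j => l * v j + c) (fun i => ne_of_gt (hvp i))
    simp only [eval_mul, eval_sub, eval_add, eval_C, eval_X, eval_prod, eval_finset_sum,
      eval_pow, hcomm]
    rw [← e1, ← e2]
    ring
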